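/- arXiv:1708.09133 — 3 statements merged into one kernel-verified Lean document; each statement's English description precedes it below -/
import Mathlib

section
/- Convergence in probability is not preserved by regular summability methods: there exists a regular matrix A (e.g., the Cesàro matrix) and a sequence of random variables (X_n) with X_n → 0 in probability such that (Ax)_n does not converge to 0 in probability. -/
open MeasureTheory Filter Topology


noncomputable def aa (n j : ℕ) : ℝ :=
  if j ∈ Finset.Ico (2^n) (2^(n+1)) then ((2:ℝ)^n)⁻¹ else 0

noncomputable def XX (j : ℕ) (ω : ℝ) : ℝ :=
  Set.indicator
    (Set.Ico (((j - 2^(Nat.log 2 j) : ℕ) : ℝ)/2^(Nat.log 2 j))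
             (((j - 2^(Nat.log 2 j) + 1 : ℕ) : ℝ)/2^(Nat.log 2 j)))
    (fun _ => (2:ℝ)^(Nat.log 2 j)) ω

lemma aa_zero {n j : ℕ} (h : j ∉ Finset.Ico (2^n) (2^(n+1))) : aa n j = 0 := by
  simp [aa, h]

lemma card_block (n : ℕ) : (2:ℕ)^(n+1) - 2^n = 2^n := by
  rw [pow_succ]; omega

lemma sum_eq_one (n : ℕ) {ω : ℝ} (hω : ω ∈ Set.Ico (0:ℝ) 1) :
    ∑' j, aa n j * XX j ω = 1 := by
  obtain ⟨hω0, hω1⟩ := hω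
  have h2n : (0:ℝ) < 2^n := by positivity
  rw [tsum_eq_sum (s := Finset.Ico (2^n) (2^(n+1)))
    (by intro j hj; rw [aa_zero hj, zero_mul])]
  rw [Finset.sum_Ico_eq_sum_range, card_block]
  have key : ∀ m ∈ Finset.range (2^n),
      aa n (2^n + m) * XX (2^n + m) ω
        = if ω ∈ Set.Ico ((m:ℝ)/2^n) (((m:ℝ)+1)/2^n) then (1:ℝ) else 0 := by
    intro m hm
    have hmlt : m < 2^n := Finset.mem_range.mp hm
    have hlog : Nat.log 2 (2^n + m) = n :=
      Nat.log_eq_of_pow_le_of_lt_pow (by omega) (by rw [pow_succ]; omega)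
    have hsub : (2^n + m) - 2^n = m := by omega
    have haa : aa n (2^n + m) = ((2:ℝ)^n)⁻¹ := by
      simp [aa, Finset.mem_Ico, pow_succ]; omega
    rw [haa, XX, hlog, hsub]
    rw [Set.indicator_apply]
    push_cast
    split_ifs <;> field_simp <;> ring
  rw [Finset.sum_congr rfl key]
  have hmem_iff : ∀ m : ℕ, (ω ∈ Set.Ico ((m:ℝ)/2^n) (((m:ℝ)+1)/2^n)) ↔ ⌊(2:ℝ)^n * ω⌋₊ = m := by
    intro m
    rw [Nat.floor_eq_iff (by positivity), Set.mem_Ico, div_le_iff₀ h2n, lt_div_iff₀ h2n]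
    constructor <;> rintro ⟨h1, h2⟩ <;> constructor <;> nlinarith
  have hm0 : ⌊(2:ℝ)^n * ω⌋₊ < 2^n := by
    rw [Nat.floor_lt (by positivity)]
    push_cast; nlinarith
  rw [Finset.sum_eq_single_of_mem (⌊(2:ℝ)^n * ω⌋₊) (Finset.mem_range.mpr hm0)]
  · rw [if_pos ((hmem_iff _).mpr rfl)]
  · intro m _ hne
    rw [if_neg]
    intro hmem
    exact hne ((hmem_iff m).mp hmem).symm

lemma aa_summable (n : ℕ) : Summable fun j => |aa n j| :=
  summable_of_ne_finset_zero (s := Finset.Ico (2^n) (2^(n+1)))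
    (by intro j hj; rw [aa_zero hj, abs_zero])

lemma aa_abs_tsum (n : ℕ) : ∑' j, |aa n j| = 1 := by
  rw [tsum_eq_sum (s := Finset.Ico (2^n) (2^(n+1)))
    (by intro j hj; rw [aa_zero hj, abs_zero])]
  have : ∀ j ∈ Finset.Ico (2^n) (2^(n+1)), |aa n j| = ((2:ℝ)^n)⁻¹ := by
    intro j hj
    rw [aa, if_pos hj, abs_of_nonneg (by positivity)]
  rw [Finset.sum_congr rfl this, Finset.sum_const, Nat.card_Ico, card_block, nsmul_eq_mul]
  push_cast
  field_simp

lemma aa_tsum (n : ℕ) : ∑' j, aa n j = 1 := by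
  have h := aa_abs_tsum n
  rw [← h]
  congr 1
  ext j
  rw [abs_of_nonneg]
  rw [aa]
  split_ifs <;> positivity

lemma XX_measurable (n : ℕ) : Measurable (XX n) :=
  Measurable.indicator measurable_const measurableSet_Ico

lemma log_tendsto : Tendsto (fun n => Nat.log 2 n) atTop atTop :=
  tendsto_atTop_atTop.mpr fun K => ⟨2^K, fun n hn => Nat.le_log_of_pow_le one_lt_two hn⟩

lemma upper_tendsto :
    Tendsto (fun n => ENNReal.ofReal (((2:ℝ)^(Nat.log 2 n))⁻¹)) atTop (𝓝 0) := by
  have h1 : Tendsto (fun k : ℕ => ((2:ℝ)^k)⁻¹) atTop (𝓝 0) := by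
    simp only [← inv_pow]
    exact tendsto_pow_atTop_nhds_zero_of_lt_one (by norm_num) (by norm_num)
  have h2 := h1.comp log_tendsto
  have h3 := (ENNReal.continuous_ofReal.tendsto 0).comp h2
  rw [ENNReal.ofReal_zero] at h3
  exact h3

lemma XX_prob (lam : ℝ) (hlam : 0 < lam) :
    Tendsto (fun n => (volume.restrict (Set.Ico (0 : ℝ) 1))
        {ω | lam < |XX n ω|}) atTop (𝓝 0) := by
  apply tendsto_of_tendsto_of_tendsto_of_le_of_le' tendsto_const_nhds upper_tendsto
  · exact Eventually.of_forall fun n => zero_le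
  · filter_upwards [eventually_ge_atTop 1] with n hn
    set k := Nat.log 2 n
    set m := n - 2^k
    have hsub : {ω : ℝ | lam < |XX n ω|} ⊆ Set.Ico ((m:ℝ)/2^k) (((m+1:ℕ):ℝ)/2^k) := by
      intro ω hω
      simp only [Set.mem_setOf_eq] at hω
      by_contra hmem
      rw [XX, Set.indicator_of_notMem hmem] at hω
      simp at hω; linarith
    calc (volume.restrict (Set.Ico (0 : ℝ) 1)) {ω | lam < |XX n ω|}
        ≤ (volume.restrict (Set.Ico (0 : ℝ) 1)) (Set.Ico ((m:ℝ)/2^k) (((m+1:ℕ):ℝ)/2^k)) :=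
          measure_mono hsub
      _ ≤ volume (Set.Ico ((m:ℝ)/2^k) (((m+1:ℕ):ℝ)/2^k)) := Measure.restrict_apply_le _ _
      _ = ENNReal.ofReal (((2:ℝ)^k)⁻¹) := by
          rw [Real.volume_Ico]
          congr 1
          push_cast
          field_simp
          ring

lemma aa_col (j : ℕ) : Tendsto (fun i => aa i j) atTop (𝓝 0) := by
  apply Tendsto.congr' _ tendsto_const_nhds
  filter_upwards [eventually_ge_atTop (j+1)] with i hi
  refine (aa_zero ?_).symm
  simp only [Finset.mem_Ico, not_and_or, not_le]
  left
  calc j < i := by omega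
    _ < 2^i := Nat.lt_two_pow_self

/-- Convergence in probability is not preserved by regular summability methods:
there are a regular matrix `a` and random variables `X n → 0` in probability
(on the probability space `[0,1)` with Lebesgue measure) whose transforms
`(Ax)_i = ∑' j, a i j * X j` do not converge to `0` in probability. -/
theorem stmt_3 :
    ∃ (a : ℕ → ℕ → ℝ) (M : ℝ) (X : ℕ → ℝ → ℝ),
      (∀ i, Summable fun j => |a i j|) ∧
      (∀ i, (∑' j, |a i j|) ≤ M) ∧
      (∀ j, Tendsto (fun i => a i j) atTop (𝓝 0)) ∧
      Tendsto (fun i => ∑' j, a i j) atTop (𝓝 1) ∧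
      (∀ n, Measurable (X n)) ∧
      (∀ lam : ℝ, 0 < lam →
        Tendsto (fun n => (volume.restrict (Set.Ico (0 : ℝ) 1))
            {ω | lam < |X n ω|}) atTop (𝓝 0)) ∧
      ¬ (∀ lam : ℝ, 0 < lam →
        Tendsto (fun n => (volume.restrict (Set.Ico (0 : ℝ) 1))
            {ω | lam < |∑' j, a n j * X j ω|}) atTop (𝓝 0)) := by
  refine ⟨aa, 1, XX, aa_summable, fun i => le_of_eq (aa_abs_tsum i), aa_col, ?_, XX_measurable,
    XX_prob, ?_⟩
  · simpa [aa_tsum] using tendsto_const_nhds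
  · intro h
    have h2 := h (1/2) (by norm_num)
    have hge : ∀ n, (1:ENNReal) ≤ (volume.restrict (Set.Ico (0 : ℝ) 1))
        {ω | 1/2 < |∑' j, aa n j * XX j ω|} := by
      intro n
      have hsub : Set.Ico (0:ℝ) 1 ⊆ {ω | 1/2 < |∑' j, aa n j * XX j ω|} := by
        intro ω hω
        simp only [Set.mem_setOf_eq, sum_eq_one n hω]
        norm_num
      calc (1:ENNReal) = (volume.restrict (Set.Ico (0:ℝ) 1)) (Set.Ico (0:ℝ) 1) := by
            rw [Measure.restrict_apply_self, Real.volume_Ico]; norm_num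
        _ ≤ _ := measure_mono hsub
    obtain ⟨n, hn⟩ := (h2.eventually (gt_mem_nhds zero_lt_one)).exists
    exact absurd (hge n) (not_le.mpr hn)
end

section
/- If real random variables X_n, X_∞ are finite almost everywhere and X_n converges to X_∞ almost surely in the sense that for every λ > 0, P(sup_{m ≥ n} |X_m − X_∞| > λ) → 0, then the Cesàro means (Σ_{i=1}^n X_i)/n converge to X_∞ in the same sense. -/
open MeasureTheory Filter Topology

/-- From the sup-tail condition, almost sure convergence follows. -/
lemma aux_ae_of_sup {Ω : Type*} [MeasurableSpace Ω] (μ : Measure Ω)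
    (X : ℕ → Ω → ℝ) (Xinf : Ω → ℝ)
    (has : ∀ lam : ℝ, 0 < lam →
      Tendsto (fun n => μ {ω | ∃ m, n ≤ m ∧ lam < |X m ω - Xinf ω|}) atTop (𝓝 0)) :
    ∀ᵐ ω ∂μ, Tendsto (fun n => X n ω) atTop (𝓝 (Xinf ω)) := by
  set A : ℝ → ℕ → Set Ω := fun lam n => {ω | ∃ m, n ≤ m ∧ lam < |X m ω - Xinf ω|} with hA
  have hnull : ∀ lam : ℝ, 0 < lam → μ (⋂ n, A lam n) = 0 := by
    intro lam hlam
    refine le_antisymm ?_ (zero_le)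
    refine ge_of_tendsto (has lam hlam) (Eventually.of_forall fun n => ?_)
    exact measure_mono (Set.iInter_subset _ n)
  have hN : μ (⋃ k : ℕ, ⋂ n, A (1 / (k + 1)) n) = 0 := by
    refine measure_iUnion_null fun k => hnull _ ?_
    positivity
  rw [ae_iff]
  refine measure_mono_null ?_ hN
  intro ω hω
  simp only [Set.mem_setOf_eq] at hω
  by_contra hmem
  apply hω
  rw [Metric.tendsto_atTop]
  intro ε hε
  obtain ⟨k, hk⟩ := exists_nat_one_div_lt hε
  have : ω ∉ ⋂ n, A (1 / (k + 1)) n := fun h => hmem (Set.mem_iUnion.2 ⟨k, h⟩)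
  rw [Set.mem_iInter] at this
  push_neg at this
  obtain ⟨n, hn⟩ := this
  refine ⟨n, fun m hm => ?_⟩
  rw [Real.dist_eq]
  by_contra hcon
  push_neg at hcon
  exact hn ⟨m, hm, lt_of_lt_of_le hk (le_trans hcon le_rfl)⟩

/-- Almost sure convergence implies the sup-tail condition, for measurable functions. -/
lemma aux_sup_of_ae {Ω : Type*} [MeasurableSpace Ω] (μ : Measure Ω) [IsProbabilityMeasure μ]
    (Y : ℕ → Ω → ℝ) (Yinf : Ω → ℝ)
    (hY : ∀ n, Measurable (Y n)) (hYinf : Measurable Yinf)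
    (h : ∀ᵐ ω ∂μ, Tendsto (fun n => Y n ω) atTop (𝓝 (Yinf ω))) :
    ∀ lam : ℝ, 0 < lam →
      Tendsto (fun n => μ {ω | ∃ m, n ≤ m ∧ lam < |Y m ω - Yinf ω|}) atTop (𝓝 0) := by
  intro lam hlam
  set s : ℕ → Set Ω := fun n => {ω | ∃ m, n ≤ m ∧ lam < |Y m ω - Yinf ω|} with hs
  have hmeas : ∀ n, MeasurableSet (s n) := by
    intro n
    have : s n = ⋃ m, ⋃ _ : n ≤ m, {ω | lam < |Y m ω - Yinf ω|} := by
      ext ω; simp [hs]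
    rw [this]
    exact MeasurableSet.iUnion fun m => MeasurableSet.iUnion fun _ =>
      measurableSet_lt measurable_const (((hY m).sub hYinf).abs)
  have hanti : Antitone s := by
    intro a b hab ω ⟨m, hm, hlt⟩
    exact ⟨m, le_trans hab hm, hlt⟩
  have hlim := tendsto_measure_iInter_atTop (fun n => (hmeas n).nullMeasurableSet) hanti
    ⟨0, measure_ne_top μ _⟩
  have hzero : μ (⋂ n, s n) = 0 := by
    refine measure_mono_null ?_ (ae_iff.mp h)
    intro ω hω
    rw [Set.mem_iInter] at hω
    simp only [Set.mem_setOf_eq]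
    intro htend
    rw [Metric.tendsto_atTop] at htend
    obtain ⟨n, hn⟩ := htend lam hlam
    obtain ⟨m, hm, hlt⟩ := hω n
    have := hn m hm
    rw [Real.dist_eq] at this
    exact absurd hlt (not_lt.2 this.le)
  rw [hzero] at hlim
  exact hlim

/-- Cesàro means preserve almost sure convergence in the strong sense:
if for every `λ > 0`, `P(sup_{m ≥ n} |X_m − X_∞| > λ) → 0`, then the same holds
for the Cesàro means `(∑_{i=1}^n X_i)/n`. -/
theorem stmt_9
    {Ω : Type*} [MeasurableSpace Ω] (μ : Measure Ω) [IsProbabilityMeasure μ]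
    (X : ℕ → Ω → ℝ) (Xinf : Ω → ℝ)
    (hX : ∀ n, Measurable (X n)) (hXinf : Measurable Xinf)
    (has : ∀ lam : ℝ, 0 < lam →
      Tendsto (fun n => μ {ω | ∃ m, n ≤ m ∧ lam < |X m ω - Xinf ω|}) atTop (𝓝 0)) :
    ∀ lam : ℝ, 0 < lam →
      Tendsto (fun n =>
          μ {ω | ∃ i, n ≤ i ∧
              lam < |(∑ k ∈ Finset.Icc 1 i, X k ω) / i - Xinf ω|}) atTop (𝓝 0) := by
  have hae := aux_ae_of_sup μ X Xinf has
  have haeY : ∀ᵐ ω ∂μ, Tendsto (fun i : ℕ => (∑ k ∈ Finset.Icc 1 i, X k ω) / i)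
      atTop (𝓝 (Xinf ω)) := by
    filter_upwards [hae] with ω hω
    have h1 : Tendsto (fun n => X (n + 1) ω) atTop (𝓝 (Xinf ω)) :=
      hω.comp (tendsto_add_atTop_nat 1)
    have h2 := h1.cesaro
    refine h2.congr fun i => ?_
    rw [div_eq_inv_mul]
    congr 1
    rw [show Finset.Icc 1 i = Finset.Ico 1 (i + 1) by rw [Finset.Ico_add_one_right_eq_Icc],
      Finset.sum_Ico_eq_sum_range]
    simp [add_comm]
  exact aux_sup_of_ae μ _ Xinf
    (fun i => (Finset.measurable_sum _ fun k _ => hX k).div measurable_const) hXinf haeY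
end

section
/- For the Cesàro matrix a_{nj} = 1/n (1 ≤ j ≤ n) and the random variables X_n on [0,1) defined by X_{2^m+i}(ω) = 4^{m+i} on [i/2^m,(i+1)/2^m) and 0 elsewhere (0 ≤ i < 2^m), for every n ≥ 16 of the form n = 2^m + i one has P((Σ_{j=1}^n X_j)/n > 1) = 1. -/
open MeasureTheory Filter Topology

lemma X_nonneg_aux (X : ℕ → ℝ → ℝ)
    (hX : ∀ m i : ℕ, i < 2 ^ m → ∀ ω : ℝ,
      X (2 ^ m + i) ω =
        if ω ∈ Set.Ico ((i : ℝ) / 2 ^ m) (((i : ℝ) + 1) / 2 ^ m)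
          then (4 : ℝ) ^ (m + i) else 0)
    (j : ℕ) (hj : 1 ≤ j) (ω : ℝ) : 0 ≤ X j ω := by
  have h1 : 2 ^ j.log2 ≤ j := Nat.log2_self_le (by omega)
  have h2 : j < 2 ^ (j.log2 + 1) := Nat.lt_log2_self
  have hp : 2 ^ (j.log2 + 1) = 2 * 2 ^ j.log2 := by ring
  have hi : j - 2 ^ j.log2 < 2 ^ j.log2 := by omega
  have hje : j = 2 ^ j.log2 + (j - 2 ^ j.log2) := by omega
  rw [hje, hX _ _ hi]
  split
  · positivity
  · exact le_rfl

/-- For the random variables `X (2^m + i) = 4^(m+i)` on `[i/2^m, (i+1)/2^m)`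
and `0` elsewhere, on `[0,1)` with Lebesgue measure, for every `n ≥ 16` of the
form `n = 2^m + i` with `0 ≤ i < 2^m`, the Cesàro mean exceeds `1` with
probability one. -/
theorem stmt_16
    (X : ℕ → ℝ → ℝ)
    (hX : ∀ m i : ℕ, i < 2 ^ m → ∀ ω : ℝ,
      X (2 ^ m + i) ω =
        if ω ∈ Set.Ico ((i : ℝ) / 2 ^ m) (((i : ℝ) + 1) / 2 ^ m)
          then (4 : ℝ) ^ (m + i) else 0) :
    ∀ m i n : ℕ, i < 2 ^ m → n = 2 ^ m + i → 16 ≤ n →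
      (volume.restrict (Set.Ico (0 : ℝ) 1))
          {ω | 1 < (∑ j ∈ Finset.Icc 1 n, X j ω) / n} = 1 := by
  intro m i n hi hn h16
  have hm : 4 ≤ m := by
    have h2m : 2 ^ (m + 1) = 2 ^ m + 2 ^ m := by ring
    have h1 : n < 2 ^ (m + 1) := by omega
    have h2 : (2:ℕ) ^ 4 < 2 ^ (m + 1) := lt_of_le_of_lt h16 h1
    have := (Nat.pow_lt_pow_iff_right (a := 2) one_lt_two).mp h2
    omega
  set M := m - 1 with hM
  have hmM : m = M + 1 := by omega
  have hMp : 2 ^ (M + 1) = 2 * 2 ^ M := by ring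
  have key : Set.Ico (0:ℝ) 1 ⊆ {ω | 1 < (∑ j ∈ Finset.Icc 1 n, X j ω) / n} := by
    intro ω hω
    obtain ⟨hω0, hω1⟩ := hω
    set i' := ⌊ω * 2 ^ M⌋₊ with hi'
    have hpow : (0:ℝ) < 2 ^ M := by positivity
    have hfloor_le : (i' : ℝ) ≤ ω * 2 ^ M := Nat.floor_le (by positivity)
    have hlt : ω * 2 ^ M < i' + 1 := Nat.lt_floor_add_one _
    have hi'lt : i' < 2 ^ M := by
      rw [hi']
      rw [Nat.floor_lt (by positivity)]
      push_cast
      nlinarith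
    -- membership in the interval
    have hmem : ω ∈ Set.Ico ((i' : ℝ) / 2 ^ M) (((i' : ℝ) + 1) / 2 ^ M) := by
      constructor
      · rw [div_le_iff₀ hpow]; linarith
      · rw [lt_div_iff₀ hpow]; linarith
    have hval : X (2 ^ M + i') ω = (4 : ℝ) ^ (M + i') := by
      rw [hX M i' hi'lt ω, if_pos hmem]
    -- the index is in the range
    have hk : 2 ^ M + i' ∈ Finset.Icc 1 n := by
      simp only [Finset.mem_Icc]
      have h2M : (1:ℕ) ≤ 2 ^ M := Nat.one_le_two_pow
      have hle : 2 ^ M + i' ≤ 2 ^ m := by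
        rw [hmM]; omega
      constructor <;> omega
    -- the single term exceeds n
    have hbig : (n : ℝ) < (4 : ℝ) ^ (M + i') := by
      have hnat : n < 4 ^ (M + i') := by
        calc n < 2 ^ (m + 1) := by
              have : 2 ^ (m + 1) = 2 ^ m + 2 ^ m := by ring
              omega
          _ ≤ 2 ^ (2 * M) := Nat.pow_le_pow_right (by norm_num) (by omega)
          _ = 4 ^ M := by rw [pow_mul]; norm_num
          _ ≤ 4 ^ (M + i') := Nat.pow_le_pow_right (by norm_num) (by omega)
      exact_mod_cast hnat
    have hsum : (n : ℝ) < ∑ j ∈ Finset.Icc 1 n, X j ω := by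
      have hterm : X (2 ^ M + i') ω ≤ ∑ j ∈ Finset.Icc 1 n, X j ω :=
        Finset.single_le_sum (fun j hj => X_nonneg_aux X hX j (Finset.mem_Icc.mp hj).1 ω) hk
      rw [hval] at hterm
      linarith
    have hn0 : (0:ℝ) < n := by positivity -- n ≥ 16
    show 1 < (∑ j ∈ Finset.Icc 1 n, X j ω) / n
    rw [lt_div_iff₀ hn0]
    linarith
  rw [Measure.restrict_apply' measurableSet_Ico,
    Set.inter_eq_self_of_subset_right key, Real.volume_Ico]
  norm_num
end
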